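/- arXiv:1304.2694 — 7 statements merged into one kernel-verified Lean document; each statement's English description precedes it below -/
import Mathlib

section
/- (Lemma 1) For any assignment s ∈ Ω, the marginal density conditioned on the orbit of s has the closed form: (1/|s^G|) · Σ_{x ∈ s^G} 𝟙[x ∘ X̂ = x̂] = H(s) / M, where s^G denotes the G-orbit of s, H(s) is the orbit Hamming weight of s, and M is the size of the G-orbit of the tuple X̂. -/
open scoped Classical
open Finset

/-- Action of a permutation of `Fin n` on an assignment `s : Fin n → V`:
`(g • s) i := s (g⁻¹ i)`. -/
def permAct {n : ℕ} {V : Type*} (g : Equiv.Perm (Fin n)) (s : Fin n → V) : Fin n → V :=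
  fun i => s (g⁻¹ i)

/-- Action of a permutation of `Fin n` on a tuple of indices `X : Fin k → Fin n`:
`(g • X) j := g (X j)`. -/
def tupleAct {n k : ℕ} (g : Equiv.Perm (Fin n)) (X : Fin k → Fin n) : Fin k → Fin n :=
  fun j => g (X j)

/-- The `G`-orbit of an assignment `s`, as a finset of the assignment space. -/
noncomputable def assignOrbit {n : ℕ} {V : Type*} [Fintype V]
    (G : Subgroup (Equiv.Perm (Fin n))) (s : Fin n → V) : Finset (Fin n → V) :=
  Finset.univ.filter (fun x => ∃ g ∈ G, permAct g s = x)

/-- The `G`-orbit of a tuple of indices, as a finset. -/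
noncomputable def tupleOrbit {n k : ℕ} (G : Subgroup (Equiv.Perm (Fin n)))
    (X : Fin k → Fin n) : Finset (Fin k → Fin n) :=
  Finset.univ.filter (fun A => ∃ g ∈ G, tupleAct g X = A)

/-- The orbit Hamming weight of `s` w.r.t. the marginal assignment `X̂ = x̂`:
the number of tuples `A` in the `G`-orbit of `X̂` with `s ∘ A = x̂`. -/
noncomputable def orbitHammingWeight {n k : ℕ} {V : Type*} [Fintype V] [DecidableEq V]
    (G : Subgroup (Equiv.Perm (Fin n))) (X : Fin k → Fin n) (xhat : Fin k → V)
    (s : Fin n → V) : ℕ :=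
  ((tupleOrbit G X).filter (fun A => s ∘ A = xhat)).card

instance permMulAction {n : ℕ} {V : Type*} : MulAction (Equiv.Perm (Fin n)) (Fin n → V) where
  smul := permAct
  one_smul _ := rfl
  mul_smul _ _ _ := rfl

lemma key {Γ α : Type*} [Group Γ] [Fintype Γ] [Fintype α] [DecidableEq α]
    [MulAction Γ α] (x₀ : α) (f : α → ℝ) :
    ∑ g : Γ, f (g • x₀) =
      ((Finset.univ.filter (fun g : Γ => g • x₀ = x₀)).card : ℝ) *
        ∑ x ∈ Finset.univ.image (fun g : Γ => g • x₀), f x := by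
  classical
  rw [Finset.sum_comp (fun x => f x) (fun g : Γ => g • x₀), Finset.mul_sum]
  apply Finset.sum_congr rfl
  intro x hx
  obtain ⟨g, -, rfl⟩ := Finset.mem_image.mp hx
  rw [nsmul_eq_mul]
  congr 2
  have himg : (Finset.univ.filter (fun h : Γ => h • x₀ = g • x₀)) =
      (Finset.univ.filter (fun h : Γ => h • x₀ = x₀)).image (fun h => g * h) := by
    ext h
    simp only [Finset.mem_filter, Finset.mem_univ, true_and, Finset.mem_image]
    constructor
    · intro hh
      refine ⟨g⁻¹ * h, ?_, by group⟩
      rw [mul_smul, hh, inv_smul_smul]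
    · rintro ⟨h', hh', rfl⟩
      rw [mul_smul, hh']
  rw [himg, Finset.card_image_of_injective _ (mul_right_injective g)]

/-- Lemma 1: the marginal density conditioned on the orbit of `s` has the
closed form `H(s) / M`. -/
theorem conditional_marginal_closed_form
    (n k : ℕ) (hn : 0 < n) (hk : 0 < k)
    (V : Type*) [Fintype V] [Nonempty V] [DecidableEq V]
    (G : Subgroup (Equiv.Perm (Fin n)))
    (Xhat : Fin k → Fin n) (hX : Function.Injective Xhat)
    (xhat : Fin k → V)
    (s : Fin n → V) :
    (1 / ((assignOrbit G s).card : ℝ)) *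
        ∑ x ∈ assignOrbit G s, (if x ∘ Xhat = xhat then (1 : ℝ) else 0) =
      (orbitHammingWeight G Xhat xhat s : ℝ) / ((tupleOrbit G Xhat).card : ℝ) := by
  classical
  set f : (Fin n → V) → ℝ := fun x => if x ∘ Xhat = xhat then (1 : ℝ) else 0 with hf
  set f₂ : (Fin k → Fin n) → ℝ := fun A => if s ∘ A = xhat then (1 : ℝ) else 0 with hf₂
  -- orbits as images
  have hA : assignOrbit G s = Finset.univ.image (fun g : ↥G => g • s) := by
    ext x
    simp only [assignOrbit, Finset.mem_filter, Finset.mem_univ, true_and, Finset.mem_image]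
    constructor
    · rintro ⟨g, hg, rfl⟩; exact ⟨⟨g, hg⟩, rfl⟩
    · rintro ⟨⟨g, hg⟩, -, rfl⟩; exact ⟨g, hg, rfl⟩
  have hT : tupleOrbit G Xhat = Finset.univ.image (fun g : ↥G => g • Xhat) := by
    ext A
    simp only [tupleOrbit, Finset.mem_filter, Finset.mem_univ, true_and, Finset.mem_image]
    constructor
    · rintro ⟨g, hg, rfl⟩; exact ⟨⟨g, hg⟩, rfl⟩
    · rintro ⟨⟨g, hg⟩, -, rfl⟩; exact ⟨g, hg, rfl⟩
  set cs : ℝ := ((Finset.univ.filter (fun g : ↥G => g • s = s)).card : ℝ) with hcs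
  set cX : ℝ := ((Finset.univ.filter (fun g : ↥G => g • Xhat = Xhat)).card : ℝ) with hcX
  set S : ℝ := ∑ x ∈ assignOrbit G s, f x with hS
  set H : ℝ := (orbitHammingWeight G Xhat xhat s : ℝ) with hH
  set Os : ℝ := ((assignOrbit G s).card : ℝ) with hOs
  set M : ℝ := ((tupleOrbit G Xhat).card : ℝ) with hM
  set cΓ : ℝ := (Fintype.card ↥G : ℝ) with hcΓ
  -- sum over orbit = H
  have hHsum : ∑ A ∈ tupleOrbit G Xhat, f₂ A = H := by
    rw [hH, orbitHammingWeight]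
    rw [Finset.sum_boole]
  -- key applications
  have E1 : ∑ g : ↥G, f (g • s) = cs * S := by
    rw [key s f, hS, hA]
  have E2 : ∑ g : ↥G, f₂ (g • Xhat) = cX * H := by
    rw [key Xhat f₂, ← hHsum, hT]
  have C1 : cΓ = cs * Os := by
    have := key (Γ := ↥G) s (fun _ => (1 : ℝ))
    simpa [← hA, hcΓ, hcs, hOs, Finset.card_univ] using this
  have C2 : cΓ = cX * M := by
    have := key (Γ := ↥G) Xhat (fun _ => (1 : ℝ))
    simpa [← hT, hcΓ, hcX, hM, Finset.card_univ] using this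
  -- bridge
  have Ebridge : ∑ g : ↥G, f (g • s) = ∑ g : ↥G, f₂ (g • Xhat) := by
    have h1 : ∀ g : ↥G, f (g • s) = f₂ (g⁻¹ • Xhat) := fun g => rfl
    rw [Finset.sum_congr rfl (fun g _ => h1 g)]
    exact Fintype.sum_equiv (Equiv.inv ↥G) _ _ (fun g => by simp)
  have E3 : cs * S = cX * H := by rw [← E1, Ebridge, E2]
  -- positivity
  have hcs_pos : 0 < cs := by
    rw [hcs]
    have : (1 : ↥G) ∈ Finset.univ.filter (fun g : ↥G => g • s = s) := by
      simp [one_smul]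
    exact_mod_cast Finset.card_pos.mpr ⟨1, this⟩
  have hcX_pos : 0 < cX := by
    rw [hcX]
    have : (1 : ↥G) ∈ Finset.univ.filter (fun g : ↥G => g • Xhat = Xhat) := by
      simp [one_smul]
    exact_mod_cast Finset.card_pos.mpr ⟨1, this⟩
  have hOs_pos : 0 < Os := by
    rw [hOs]
    have : s ∈ assignOrbit G s := by
      simp only [assignOrbit, Finset.mem_filter, Finset.mem_univ, true_and]
      exact ⟨1, one_mem G, rfl⟩
    exact_mod_cast Finset.card_pos.mpr ⟨s, this⟩
  have hM_pos : 0 < M := by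
    rw [hM]
    have : Xhat ∈ tupleOrbit G Xhat := by
      simp only [tupleOrbit, Finset.mem_filter, Finset.mem_univ, true_and]
      exact ⟨1, one_mem G, rfl⟩
    exact_mod_cast Finset.card_pos.mpr ⟨Xhat, this⟩
  rw [one_div, inv_mul_eq_div, div_eq_div_iff hOs_pos.ne' hM_pos.ne']
  have hmain : cs * (S * M - H * Os) = 0 := by linear_combination M * E3 + H * C1 - H * C2
  have := mul_eq_zero.mp hmain
  rcases this with h | h
  · exact absurd h hcs_pos.ne'
  · linarith
end

section
/- (Unbiasedness of the Rao-Blackwell estimator) If P is a G-invariant probability distribution on Ω, then the expectation of the single-sample Rao-Blackwell estimator equals the true marginal density: Σ_{s ∈ Ω} P(s) · H(s)/M = θ, where θ := Σ_{s : s ∘ X̂ = x̂} P(s). -/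
open scoped Classical
open Finset

/-- the single-sample Rao-Blackwell estimator is unbiased: its expectation
under a `G`-invariant distribution `P` equals the true marginal density `θ`. -/
theorem rao_blackwell_unbiased
    (n k : ℕ) (hn : 0 < n) (hk : 0 < k)
    (V : Type*) [Fintype V] [Nonempty V] [DecidableEq V]
    (G : Subgroup (Equiv.Perm (Fin n)))
    (Xhat : Fin k → Fin n) (hX : Function.Injective Xhat)
    (xhat : Fin k → V)
    (P : (Fin n → V) → ℝ)
    (hP0 : ∀ s, 0 ≤ P s)
    (hP1 : ∑ s : Fin n → V, P s = 1)
    (hPG : ∀ g ∈ G, ∀ s : Fin n → V, P (permAct g s) = P s) :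
    ∑ s : Fin n → V,
        P s * ((orbitHammingWeight G Xhat xhat s : ℝ) / ((tupleOrbit G Xhat).card : ℝ)) =
      ∑ s ∈ Finset.univ.filter (fun s : Fin n → V => s ∘ Xhat = xhat), P s := by
  classical
  set θ := ∑ s ∈ Finset.univ.filter (fun s : Fin n → V => s ∘ Xhat = xhat), P s with hθ
  have key : ∀ A ∈ tupleOrbit G Xhat,
      ∑ s ∈ Finset.univ.filter (fun s : Fin n → V => s ∘ A = xhat), P s = θ := by
    intro A hA
    simp only [tupleOrbit, Finset.mem_filter, Finset.mem_univ, true_and] at hA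
    obtain ⟨g, hg, rfl⟩ := hA
    rw [hθ]
    refine Finset.sum_equiv (Equiv.arrowCongr (g⁻¹ : Equiv.Perm (Fin n)) (Equiv.refl V)) ?_ ?_
    · intro s
      simp only [Finset.mem_filter, Finset.mem_univ, true_and, Equiv.arrowCongr_apply]
      constructor
      · intro h; funext j
        simpa [tupleAct, Function.comp, Equiv.Perm.inv_def, Equiv.symm_symm] using congrFun h j
      · intro h; funext j
        simpa [tupleAct, Function.comp, Equiv.Perm.inv_def, Equiv.symm_symm] using congrFun h j
    · intro s _
      exact (hPG g⁻¹ (G.inv_mem hg) s).symm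
  have hM : Xhat ∈ tupleOrbit G Xhat := by
    simp only [tupleOrbit, Finset.mem_filter, Finset.mem_univ, true_and]
    exact ⟨1, G.one_mem, rfl⟩
  have hMpos : (0:ℝ) < ((tupleOrbit G Xhat).card : ℝ) := by
    exact_mod_cast Finset.card_pos.mpr ⟨Xhat, hM⟩
  have main : ∑ s : Fin n → V, P s * (orbitHammingWeight G Xhat xhat s : ℝ)
      = ((tupleOrbit G Xhat).card : ℝ) * θ := by
    have h1 : ∀ s : Fin n → V, P s * (orbitHammingWeight G Xhat xhat s : ℝ)
        = ∑ A ∈ tupleOrbit G Xhat, if s ∘ A = xhat then P s else 0 := by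
      intro s
      rw [orbitHammingWeight, Finset.card_filter]
      push_cast
      rw [Finset.mul_sum]
      simp [mul_ite]
    simp_rw [h1]
    rw [Finset.sum_comm]
    have h2 : ∀ A ∈ tupleOrbit G Xhat,
        ∑ s : Fin n → V, (if s ∘ A = xhat then P s else 0) = θ := by
      intro A hA
      rw [← key A hA, Finset.sum_filter]
    rw [Finset.sum_congr rfl h2, Finset.sum_const, nsmul_eq_mul]
  calc ∑ s : Fin n → V,
        P s * ((orbitHammingWeight G Xhat xhat s : ℝ) / ((tupleOrbit G Xhat).card : ℝ))
      = (∑ s : Fin n → V, P s * (orbitHammingWeight G Xhat xhat s : ℝ))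
          / ((tupleOrbit G Xhat).card : ℝ) := by
        rw [Finset.sum_div]; congr 1; funext s; ring
    _ = θ := by rw [main]; field_simp
end

section
/- (Theorem 2(b)) Let P be a G-invariant probability distribution on Ω, let N ≥ 1, and give the sample space Ω^N := (Fin N → Ω) the N-fold product distribution P^N. Define the standard estimator θ̂(s₁,…,s_N) := (1/N) Σ_{i=1}^N 𝟙[s_i ∘ X̂ = x̂] and the Rao-Blackwell estimator θ̂^rb(s₁,…,s_N) := (1/N) Σ_{i=1}^N H(s_i)/M, and let θ := Σ_{s : s ∘ X̂ = x̂} P(s). Then the mean squared error of the Rao-Blackwell estimator is at most that of the standard estimator: Σ_{(s₁,…,s_N) ∈ Ω^N} P^N(s₁,…,s_N) · (θ̂^rb(s₁,…,s_N) − θ)² ≤ Σ_{(s₁,…,s_N) ∈ Ω^N} P^N(s₁,…,s_N) · (θ̂(s₁,…,s_N) − θ)². -/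
open scoped Classical
open Finset

section Aux
variable {Ω : Type*} [Fintype Ω]

lemma sum_prod_pi (N : ℕ) (g : Fin N → Ω → ℝ) :
    ∑ ss : Fin N → Ω, ∏ i, g i (ss i) = ∏ i, ∑ s, g i s := by
  rw [Finset.prod_univ_sum, Fintype.piFinset_univ]

lemma expectation_one (N : ℕ) (P : Ω → ℝ) (hP1 : ∑ s, P s = 1) :
    ∑ ss : Fin N → Ω, ∏ i, P (ss i) = 1 := by
  rw [sum_prod_pi]; simp [hP1]

lemma expectation_single (N : ℕ) (P q : Ω → ℝ) (hP1 : ∑ s, P s = 1) (i : Fin N) :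
    ∑ ss : Fin N → Ω, (∏ l, P (ss l)) * q (ss i) = ∑ s, P s * q s := by
  have h : ∀ ss : Fin N → Ω, (∏ l, P (ss l)) * q (ss i)
      = ∏ l, (P (ss l) * (if i = l then q (ss l) else 1)) := by
    intro ss
    rw [Finset.prod_mul_distrib, Finset.prod_ite_eq]
    simp
  simp_rw [h]
  rw [sum_prod_pi N (fun l s => P s * (if i = l then q s else 1)), Finset.prod_eq_single i]
  · simp
  · intro l _ hl
    simp [if_neg (Ne.symm hl), hP1]
  · simp

lemma expectation_pair (N : ℕ) (P q : Ω → ℝ) (hP1 : ∑ s, P s = 1)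
    (θ : ℝ) (hmean : ∑ s, P s * q s = θ) (i j : Fin N) :
    ∑ ss : Fin N → Ω, (∏ l, P (ss l)) * (q (ss i) * q (ss j)) =
      if i = j then ∑ s, P s * q s ^ 2 else θ ^ 2 := by
  have h : ∀ ss : Fin N → Ω, (∏ l, P (ss l)) * (q (ss i) * q (ss j))
      = ∏ l, (P (ss l) * ((if i = l then q (ss l) else 1) * (if j = l then q (ss l) else 1))) := by
    intro ss
    rw [Finset.prod_mul_distrib, Finset.prod_mul_distrib, Finset.prod_ite_eq,
      Finset.prod_ite_eq]
    simp [mul_assoc]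
  simp_rw [h]
  rw [sum_prod_pi N (fun l s => P s * ((if i = l then q s else 1) * (if j = l then q s else 1)))]
  by_cases hij : i = j
  · subst hij
    simp only [if_pos rfl]
    rw [Finset.prod_eq_single i]
    · simp [sq]
    · intro l _ hl
      simp [if_neg (Ne.symm hl), hP1]
    · simp
  · rw [if_neg hij]
    set F : Fin N → ℝ := fun l => ∑ s, P s * ((if i = l then q s else 1) * (if j = l then q s else 1)) with hF
    have hFi : F i = θ := by
      rw [← hmean, hF]
      exact Finset.sum_congr rfl fun s _ => by rw [if_pos rfl, if_neg (Ne.symm hij)]; ring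
    have hFj : F j = θ := by
      rw [← hmean, hF]
      exact Finset.sum_congr rfl fun s _ => by rw [if_pos rfl, if_neg hij]; ring
    have hrest : ∀ l : Fin N, l ≠ i → l ≠ j → F l = 1 := by
      intro l h1 h2
      simp [hF, if_neg (Ne.symm h1), if_neg (Ne.symm h2), hP1]
    have hji : j ∈ (Finset.univ : Finset (Fin N)).erase i :=
      Finset.mem_erase.mpr ⟨fun hh => hij hh.symm, Finset.mem_univ j⟩
    calc ∏ l, F l = F i * ∏ l ∈ Finset.univ.erase i, F l :=
          (Finset.mul_prod_erase _ _ (Finset.mem_univ i)).symm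
      _ = F i * (F j * ∏ l ∈ (Finset.univ.erase i).erase j, F l) := by
          rw [Finset.mul_prod_erase _ _ hji]
      _ = θ ^ 2 := by
          rw [hFi, hFj, Finset.prod_eq_one]
          · ring
          · intro l hl
            rw [Finset.mem_erase, Finset.mem_erase] at hl
            exact hrest l hl.2.1 hl.1

lemma mse_formula (N : ℕ) (hN : 1 ≤ N) (P q : Ω → ℝ) (hP1 : ∑ s, P s = 1)
    (θ : ℝ) (hmean : ∑ s, P s * q s = θ) :
    ∑ ss : Fin N → Ω, (∏ i, P (ss i)) * ((1 / (N : ℝ)) * (∑ i, q (ss i)) - θ) ^ 2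
      = (1 / (N : ℝ)) * ((∑ s, P s * q s ^ 2) - θ ^ 2) := by
  have hNne : (N : ℝ) ≠ 0 := Nat.cast_ne_zero.mpr (by omega)
  set c : ℝ := 1 / (N : ℝ) with hc
  set E2 : ℝ := ∑ s, P s * q s ^ 2 with hE2
  have step1 : ∑ ss : Fin N → Ω, (∏ i, P (ss i)) * ((c * ∑ i, q (ss i)) - θ) ^ 2
      = ∑ ss : Fin N → Ω,
          (c ^ 2 * ∑ i, ∑ j, (∏ l, P (ss l)) * (q (ss i) * q (ss j))
            - 2 * θ * c * ∑ i, (∏ l, P (ss l)) * q (ss i)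
            + θ ^ 2 * ∏ l, P (ss l)) := by
    refine Finset.sum_congr rfl fun ss _ => ?_
    have hsq : ∑ i, ∑ j, (∏ l, P (ss l)) * (q (ss i) * q (ss j))
        = (∏ l, P (ss l)) * ((∑ i, q (ss i)) * (∑ j, q (ss j))) := by
      rw [Finset.sum_mul_sum]
      simp_rw [Finset.mul_sum]
    have hs1 : ∑ i, (∏ l, P (ss l)) * q (ss i)
        = (∏ l, P (ss l)) * ∑ i, q (ss i) := by
      rw [Finset.mul_sum]
    rw [hsq, hs1]
    ring
  rw [step1]
  rw [Finset.sum_add_distrib, Finset.sum_sub_distrib, ← Finset.mul_sum, ← Finset.mul_sum,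
    ← Finset.mul_sum]
  have hA : ∑ ss : Fin N → Ω, ∑ i, ∑ j, (∏ l, P (ss l)) * (q (ss i) * q (ss j))
      = (N : ℝ) * ((N : ℝ) * θ ^ 2 + (E2 - θ ^ 2)) := by
    rw [Finset.sum_comm]
    have h1 : ∀ i : Fin N, ∑ ss : Fin N → Ω, ∑ j, (∏ l, P (ss l)) * (q (ss i) * q (ss j))
        = (N : ℝ) * θ ^ 2 + (E2 - θ ^ 2) := by
      intro i
      rw [Finset.sum_comm]
      have h2 : ∀ j : Fin N, ∑ ss : Fin N → Ω, (∏ l, P (ss l)) * (q (ss i) * q (ss j))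
          = θ ^ 2 + (if i = j then E2 - θ ^ 2 else 0) := by
        intro j
        rw [expectation_pair N P q hP1 θ hmean i j]
        split_ifs <;> ring
      simp_rw [h2]
      rw [Finset.sum_add_distrib, Finset.sum_const, Finset.sum_ite_eq]
      simp
    simp_rw [h1]
    rw [Finset.sum_const]
    simp [mul_comm, mul_add]
  have hB : ∑ ss : Fin N → Ω, ∑ i, (∏ l, P (ss l)) * q (ss i) = (N : ℝ) * θ := by
    rw [Finset.sum_comm]
    simp_rw [expectation_single N P q hP1, hmean]
    rw [Finset.sum_const]
    simp [mul_comm]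
  rw [hA, hB, expectation_one N P hP1, hc]
  field_simp
  ring

end Aux

/-- Theorem 2(b): the mean squared error of the Rao-Blackwell estimator is
at most that of the standard estimator, for `N` i.i.d. sample points drawn from a
`G`-invariant distribution `P`. -/
theorem rao_blackwell_mse_le_standard_mse
    (n k : ℕ) (hn : 0 < n) (hk : 0 < k)
    (V : Type*) [Fintype V] [Nonempty V] [DecidableEq V]
    (G : Subgroup (Equiv.Perm (Fin n)))
    (Xhat : Fin k → Fin n) (hX : Function.Injective Xhat)
    (xhat : Fin k → V)
    (P : (Fin n → V) → ℝ)
    (hP0 : ∀ s, 0 ≤ P s)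
    (hP1 : ∑ s : Fin n → V, P s = 1)
    (hPG : ∀ g ∈ G, ∀ s : Fin n → V, P (permAct g s) = P s)
    (N : ℕ) (hN : 1 ≤ N) :
    ∑ ss : Fin N → (Fin n → V),
        (∏ i, P (ss i)) *
          ((1 / (N : ℝ)) * (∑ i, (orbitHammingWeight G Xhat xhat (ss i) : ℝ) /
              ((tupleOrbit G Xhat).card : ℝ)) -
            ∑ s ∈ Finset.univ.filter (fun s : Fin n → V => s ∘ Xhat = xhat), P s) ^ 2 ≤
      ∑ ss : Fin N → (Fin n → V),
        (∏ i, P (ss i)) *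
          ((1 / (N : ℝ)) * (∑ i, if ss i ∘ Xhat = xhat then (1 : ℝ) else 0) -
            ∑ s ∈ Finset.univ.filter (fun s : Fin n → V => s ∘ Xhat = xhat), P s) ^ 2 := by
  set θ : ℝ := ∑ s ∈ Finset.univ.filter (fun s : Fin n → V => s ∘ Xhat = xhat), P s with hθ
  set M : ℕ := (tupleOrbit G Xhat).card with hMdef
  set f : (Fin n → V) → ℝ :=
    fun s => (orbitHammingWeight G Xhat xhat s : ℝ) / (M : ℝ) with hf
  set h : (Fin n → V) → ℝ := fun s => if s ∘ Xhat = xhat then (1 : ℝ) else 0 with hh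
  -- the orbit is nonempty
  have hXorb : Xhat ∈ tupleOrbit G Xhat := by
    rw [tupleOrbit, Finset.mem_filter]
    exact ⟨Finset.mem_univ _, 1, G.one_mem, by funext j; simp [tupleAct]⟩
  have hM : 0 < M := Finset.card_pos.mpr ⟨Xhat, hXorb⟩
  have hMne : (M : ℝ) ≠ 0 := Nat.cast_ne_zero.mpr hM.ne'
  -- mean of the indicator
  have hmeanh : ∑ s, P s * h s = θ := by
    rw [hθ, Finset.sum_filter]
    exact Finset.sum_congr rfl fun s _ => by rw [hh]; split_ifs with hc <;> simp [hc]
  -- invariance of the per-tuple indicator expectation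
  have hAθ : ∀ A ∈ tupleOrbit G Xhat,
      ∑ s : Fin n → V, P s * (if s ∘ A = xhat then (1 : ℝ) else 0) = θ := by
    intro A hA
    rw [tupleOrbit, Finset.mem_filter] at hA
    obtain ⟨-, g, hg, hgA⟩ := hA
    have hbij : Function.Bijective (fun t : Fin n → V => permAct g t) := by
      rw [Function.bijective_iff_has_inverse]
      refine ⟨fun t => permAct g⁻¹ t, fun t => ?_, fun t => ?_⟩ <;>
        · funext i; simp [permAct]
    have hcomp : ∀ t : Fin n → V, (permAct g t) ∘ A = t ∘ Xhat := by
      intro t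
      funext j
      rw [← hgA]
      simp [permAct, tupleAct]
    calc ∑ s : Fin n → V, P s * (if s ∘ A = xhat then (1 : ℝ) else 0)
        = ∑ t : Fin n → V, P t * (if t ∘ Xhat = xhat then (1 : ℝ) else 0) := by
          refine (Fintype.sum_bijective _ hbij _ _ fun t => ?_).symm
          rw [hPG g hg t, hcomp t]
      _ = θ := hmeanh
  -- mean of the Hamming weight
  have hHsum : ∑ s : Fin n → V, P s * (orbitHammingWeight G Xhat xhat s : ℝ) = (M : ℝ) * θ := by
    have hcard : ∀ s : Fin n → V, ((orbitHammingWeight G Xhat xhat s : ℝ))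
        = ∑ A ∈ tupleOrbit G Xhat, if s ∘ A = xhat then (1 : ℝ) else 0 := by
      intro s
      rw [orbitHammingWeight, Finset.card_filter]
      push_cast
      rfl
    simp_rw [hcard, Finset.mul_sum]
    rw [Finset.sum_comm]
    rw [Finset.sum_congr rfl hAθ, Finset.sum_const, hMdef, nsmul_eq_mul]
  have hmeanf : ∑ s, P s * f s = θ := by
    have : ∑ s, P s * f s
        = (∑ s : Fin n → V, P s * (orbitHammingWeight G Xhat xhat s : ℝ)) * (M : ℝ)⁻¹ := by
      rw [Finset.sum_mul]
      exact Finset.sum_congr rfl fun s _ => by rw [hf]; ring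
    rw [this, hHsum]
    field_simp
  -- second moments
  have hfle : ∀ s, 0 ≤ f s ∧ f s ≤ 1 := by
    intro s
    constructor
    · exact div_nonneg (Nat.cast_nonneg _) (Nat.cast_nonneg _)
    · rw [hf, div_le_one (Nat.cast_pos.mpr hM)]
      exact_mod_cast Finset.card_le_card (Finset.filter_subset _ _)
  have hsecond : ∑ s, P s * f s ^ 2 ≤ ∑ s, P s * h s ^ 2 := by
    have h1 : ∑ s, P s * f s ^ 2 ≤ ∑ s, P s * f s := by
      refine Finset.sum_le_sum fun s _ => ?_
      have := hfle s
      have hkey : 0 ≤ P s * (f s * (1 - f s)) :=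
        mul_nonneg (hP0 s) (mul_nonneg this.1 (by linarith [this.2]))
      nlinarith [hkey]
    have h2 : ∑ s, P s * h s ^ 2 = ∑ s, P s * h s := by
      refine Finset.sum_congr rfl fun s _ => ?_
      rw [hh]; simp only []; split_ifs with hc <;> simp [hc]
    rw [h2, hmeanh, ← hmeanf]
    exact h1
  have e1 := mse_formula N hN P f hP1 θ hmeanf
  have e2 := mse_formula N hN P h hP1 θ hmeanh
  calc ∑ ss : Fin N → (Fin n → V),
        (∏ i, P (ss i)) * ((1 / (N : ℝ)) * (∑ i, f (ss i)) - θ) ^ 2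
      = (1 / (N : ℝ)) * ((∑ s, P s * f s ^ 2) - θ ^ 2) := e1
    _ ≤ (1 / (N : ℝ)) * ((∑ s, P s * h s ^ 2) - θ ^ 2) := by
        apply mul_le_mul_of_nonneg_left (sub_le_sub_right hsecond _)
        positivity
    _ = ∑ ss : Fin N → (Fin n → V),
        (∏ i, P (ss i)) * ((1 / (N : ℝ)) * (∑ i, h (ss i)) - θ) ^ 2 := e2.symm
end

section
/- (Asymptotic variance corollary of Theorem 2) If P is a G-invariant probability distribution on Ω, then the variance under P of the single-sample Rao-Blackwell estimate is at most the variance of the single-sample indicator: Σ_{s ∈ Ω} P(s)·(H(s)/M)² − θ² ≤ Σ_{s ∈ Ω} P(s)·𝟙[s ∘ X̂ = x̂] − θ², where θ := Σ_{s : s ∘ X̂ = x̂} P(s). -/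
open scoped Classical
open Finset

/-- asymptotic variance corollary of Theorem 2: the variance under `P` of
the single-sample Rao-Blackwell estimate is at most the variance of the single-sample
indicator. -/
theorem rao_blackwell_variance_le_standard_variance
    (n k : ℕ) (hn : 0 < n) (hk : 0 < k)
    (V : Type*) [Fintype V] [Nonempty V] [DecidableEq V]
    (G : Subgroup (Equiv.Perm (Fin n)))
    (Xhat : Fin k → Fin n) (hX : Function.Injective Xhat)
    (xhat : Fin k → V)
    (P : (Fin n → V) → ℝ)
    (hP0 : ∀ s, 0 ≤ P s)
    (hP1 : ∑ s : Fin n → V, P s = 1)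
    (hPG : ∀ g ∈ G, ∀ s : Fin n → V, P (permAct g s) = P s) :
    (∑ s : Fin n → V,
        P s * ((orbitHammingWeight G Xhat xhat s : ℝ) /
            ((tupleOrbit G Xhat).card : ℝ)) ^ 2) -
        (∑ s ∈ Finset.univ.filter (fun s : Fin n → V => s ∘ Xhat = xhat), P s) ^ 2 ≤
      (∑ s : Fin n → V, P s * (if s ∘ Xhat = xhat then (1 : ℝ) else 0)) -
        (∑ s ∈ Finset.univ.filter (fun s : Fin n → V => s ∘ Xhat = xhat), P s) ^ 2 := by
  set θ : ℝ := ∑ s ∈ Finset.univ.filter (fun s : Fin n → V => s ∘ Xhat = xhat), P s with hθ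
  have hXorb : Xhat ∈ tupleOrbit G Xhat := by
    simp only [tupleOrbit, Finset.mem_filter, Finset.mem_univ, true_and]
    exact ⟨1, G.one_mem, by funext j; simp [tupleAct]⟩
  have hM : 0 < (tupleOrbit G Xhat).card := Finset.card_pos.mpr ⟨Xhat, hXorb⟩
  have hMR : (0:ℝ) < ((tupleOrbit G Xhat).card : ℝ) := by exact_mod_cast hM
  -- the indicator sum equals θ
  have hind : ∑ s : Fin n → V, P s * (if s ∘ Xhat = xhat then (1:ℝ) else 0) = θ := by
    rw [hθ, Finset.sum_filter]
    exact Finset.sum_congr rfl (fun s _ => by split <;> simp)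
  -- for each orbit element A, the conditional mass is θ
  have horb : ∀ A ∈ tupleOrbit G Xhat,
      ∑ s : Fin n → V, P s * (if s ∘ A = xhat then (1:ℝ) else 0) = θ := by
    intro A hA
    simp only [tupleOrbit, Finset.mem_filter, Finset.mem_univ, true_and] at hA
    obtain ⟨g, hg, hgA⟩ := hA
    have := Fintype.sum_equiv (Equiv.arrowCongr (g : Equiv.Perm (Fin n)) (Equiv.refl V))
      (fun t : Fin n → V => P t * (if t ∘ Xhat = xhat then (1:ℝ) else 0))
      (fun s : Fin n → V => P s * (if s ∘ A = xhat then (1:ℝ) else 0)) ?_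
    · rw [← this, hind]
    · intro t
      have h1 : (Equiv.arrowCongr (g : Equiv.Perm (Fin n)) (Equiv.refl V)) t = permAct g t := by
        funext i; simp [Equiv.arrowCongr, permAct]
      simp only [h1, hPG g hg]
      congr 2
      have : permAct g t ∘ A = t ∘ Xhat := by
        funext j
        rw [← hgA]
        simp [permAct, tupleAct]
      rw [this]
  -- key: expected weight
  have hkey : ∑ s : Fin n → V, P s * (orbitHammingWeight G Xhat xhat s : ℝ) =
      ((tupleOrbit G Xhat).card : ℝ) * θ := by
    have hH : ∀ s : Fin n → V, (orbitHammingWeight G Xhat xhat s : ℝ) =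
        ∑ A ∈ tupleOrbit G Xhat, (if s ∘ A = xhat then (1:ℝ) else 0) := by
      intro s
      rw [orbitHammingWeight, Finset.card_filter]
      push_cast
      rfl
    calc ∑ s : Fin n → V, P s * (orbitHammingWeight G Xhat xhat s : ℝ)
        = ∑ s : Fin n → V, ∑ A ∈ tupleOrbit G Xhat,
            P s * (if s ∘ A = xhat then (1:ℝ) else 0) := by
          refine Finset.sum_congr rfl fun s _ => ?_
          rw [hH s, Finset.mul_sum]
      _ = ∑ A ∈ tupleOrbit G Xhat, ∑ s : Fin n → V,
            P s * (if s ∘ A = xhat then (1:ℝ) else 0) := Finset.sum_comm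
      _ = ∑ A ∈ tupleOrbit G Xhat, θ := Finset.sum_congr rfl horb
      _ = ((tupleOrbit G Xhat).card : ℝ) * θ := by rw [Finset.sum_const, nsmul_eq_mul]
  -- the RB estimate is in [0,1]
  have hfrac : ∀ s : Fin n → V,
      (orbitHammingWeight G Xhat xhat s : ℝ) / ((tupleOrbit G Xhat).card : ℝ) ≤ 1 := by
    intro s
    rw [div_le_one hMR]
    exact_mod_cast Finset.card_filter_le _ _
  have hfrac0 : ∀ s : Fin n → V,
      0 ≤ (orbitHammingWeight G Xhat xhat s : ℝ) / ((tupleOrbit G Xhat).card : ℝ) := by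
    intro s
    exact div_nonneg (Nat.cast_nonneg _) (Nat.cast_nonneg _)
  have hmean : ∑ s : Fin n → V,
      P s * ((orbitHammingWeight G Xhat xhat s : ℝ) / ((tupleOrbit G Xhat).card : ℝ)) = θ := by
    calc ∑ s : Fin n → V,
        P s * ((orbitHammingWeight G Xhat xhat s : ℝ) / ((tupleOrbit G Xhat).card : ℝ))
        = (∑ s : Fin n → V, P s * (orbitHammingWeight G Xhat xhat s : ℝ)) /
            ((tupleOrbit G Xhat).card : ℝ) := by
          rw [Finset.sum_div]
          exact Finset.sum_congr rfl fun s _ => by ring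
      _ = θ := by rw [hkey, mul_comm, mul_div_assoc, div_self hMR.ne', mul_one]
  have hstep : ∑ s : Fin n → V,
      P s * ((orbitHammingWeight G Xhat xhat s : ℝ) / ((tupleOrbit G Xhat).card : ℝ)) ^ 2 ≤ θ := by
    rw [← hmean]
    refine Finset.sum_le_sum fun s _ => ?_
    have h1 := hfrac s
    have h0 := hfrac0 s
    have : ((orbitHammingWeight G Xhat xhat s : ℝ) / ((tupleOrbit G Xhat).card : ℝ)) ^ 2 ≤
        (orbitHammingWeight G Xhat xhat s : ℝ) / ((tupleOrbit G Xhat).card : ℝ) := by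
      nlinarith
    exact mul_le_mul_of_nonneg_left this (hP0 s)
  rw [hind]
  linarith
end

section
/- Let Q be a G-invariant row-stochastic matrix on a finite state space Ω with quotient matrix Q' on the set 𝒪 of G-orbits, and let π be a probability vector on Ω with lumped vector π'(O) := Σ_{x ∈ O} π(x). Then for every t ∈ ℕ and every state x ∈ Ω, the total variation distance of the lumped chain from π' is at most the total variation distance of the original chain from π: (1/2) Σ_{O ∈ 𝒪} |(Q')^t([x], O) − π'(O)| ≤ (1/2) Σ_{y ∈ Ω} |Q^t(x, y) − π(y)|. -/
open scoped Classical
open Finset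

/-- The `t`-th power of a matrix on a finite type:
`Q^0 = identity`, `Q^{t+1}(x,z) = Σ_y Q^t(x,y) · Q(y,z)`. -/
noncomputable def matPow {α : Type*} [Fintype α] (Q : α → α → ℝ) : ℕ → α → α → ℝ
  | 0 => fun x y => if x = y then 1 else 0
  | t + 1 => fun x z => ∑ y, matPow Q t x y * Q y z

/-- The quotient (lumped) matrix of `Q` on the set of `G`-orbits:
`Q'([x], O) := Σ_{y ∈ O} Q(x, y)`, using the canonical representative of each orbit
(this is independent of the representative when `Q` is `G`-invariant, by exact
lumpability). -/
noncomputable def quotMat (G : Type*) {Ω : Type*} [Group G] [MulAction G Ω] [Fintype Ω]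
    (Q : Ω → Ω → ℝ) (a b : Quotient (MulAction.orbitRel G Ω)) : ℝ :=
  ∑ y ∈ Finset.univ.filter
      (fun y : Ω => (⟦y⟧ : Quotient (MulAction.orbitRel G Ω)) = b),
    Q a.out y

/-- The lumped vector of `π` on the set of `G`-orbits: `π'(O) := Σ_{x ∈ O} π(x)`. -/
noncomputable def lumpVec (G : Type*) {Ω : Type*} [Group G] [MulAction G Ω] [Fintype Ω]
    (π : Ω → ℝ) (a : Quotient (MulAction.orbitRel G Ω)) : ℝ :=
  ∑ x ∈ Finset.univ.filter
      (fun x : Ω => (⟦x⟧ : Quotient (MulAction.orbitRel G Ω)) = a),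
    π x

lemma quot_smul' {G Ω : Type*} [Group G] [MulAction G Ω] (g : G) (y : Ω) :
    (⟦g • y⟧ : Quotient (MulAction.orbitRel G Ω)) = ⟦y⟧ :=
  Quotient.sound ⟨g, rfl⟩

lemma matPow_inv {G Ω : Type*} [Group G] [Fintype Ω] [MulAction G Ω]
    (Q : Ω → Ω → ℝ) (hQG : ∀ (g : G) (x y : Ω), Q (g • x) (g • y) = Q x y) :
    ∀ (t : ℕ) (g : G) (x y : Ω), matPow Q t (g • x) (g • y) = matPow Q t x y := by
  intro t
  induction t with
  | zero => intro g x y; simp [matPow, smul_left_cancel_iff]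
  | succ t ih =>
      intro g x y
      show (∑ z, matPow Q t (g • x) z * Q z (g • y)) = ∑ z, matPow Q t x z * Q z y
      rw [← Equiv.sum_comp (MulAction.toPerm g)]
      simp only [MulAction.toPerm_apply, ih, hQG]

lemma fiber_sum_inv {G Ω : Type*} [Group G] [Fintype Ω] [MulAction G Ω]
    (R : Ω → Ω → ℝ) (hR : ∀ (g : G) (x y : Ω), R (g • x) (g • y) = R x y)
    (g : G) (x : Ω) (b : Quotient (MulAction.orbitRel G Ω)) :
    (∑ y ∈ Finset.univ.filter
      (fun y : Ω => (⟦y⟧ : Quotient (MulAction.orbitRel G Ω)) = b), R (g • x) y)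
    = ∑ y ∈ Finset.univ.filter
      (fun y : Ω => (⟦y⟧ : Quotient (MulAction.orbitRel G Ω)) = b), R x y := by
  refine Finset.sum_nbij' (fun y => g⁻¹ • y) (fun y => g • y) ?_ ?_ ?_ ?_ ?_
  · intro y hy
    simp only [Finset.mem_filter, Finset.mem_univ, true_and] at hy ⊢
    rw [quot_smul', hy]
  · intro y hy
    simp only [Finset.mem_filter, Finset.mem_univ, true_and] at hy ⊢
    rw [quot_smul', hy]
  · intro y _; simp
  · intro y _; simp
  · intro y _
    have : R (g • x) y = R (g • x) (g • (g⁻¹ • y)) := by simp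
    rw [this, hR]

lemma key_s14 {G Ω : Type*} [Group G] [Fintype Ω] [MulAction G Ω]
    (Q : Ω → Ω → ℝ) (hQG : ∀ (g : G) (x y : Ω), Q (g • x) (g • y) = Q x y) :
    ∀ (t : ℕ) (x : Ω) (b : Quotient (MulAction.orbitRel G Ω)),
      matPow (quotMat G Q) t (⟦x⟧ : Quotient (MulAction.orbitRel G Ω)) b
      = ∑ y ∈ Finset.univ.filter
          (fun y : Ω => (⟦y⟧ : Quotient (MulAction.orbitRel G Ω)) = b),
        matPow Q t x y := by
  intro t
  induction t with
  | zero =>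
      intro x b
      simp only [matPow]
      rw [Finset.sum_ite_eq (Finset.univ.filter
        (fun y : Ω => (⟦y⟧ : Quotient (MulAction.orbitRel G Ω)) = b)) x (fun _ => (1:ℝ))]
      simp [eq_comm]
  | succ t ih =>
      intro x b
      show (∑ a, matPow (quotMat G Q) t ⟦x⟧ a * quotMat G Q a b) = _
      have hstep : ∀ (a : Quotient (MulAction.orbitRel G Ω)) (y : Ω),
          (⟦y⟧ : Quotient (MulAction.orbitRel G Ω)) = a →
          quotMat G Q a b = ∑ z ∈ Finset.univ.filter
            (fun z : Ω => (⟦z⟧ : Quotient (MulAction.orbitRel G Ω)) = b), Q y z := by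
        intro a y hy
        have h1 : (⟦a.out⟧ : Quotient (MulAction.orbitRel G Ω)) = ⟦y⟧ := by
          rw [hy]; exact a.out_eq
        obtain ⟨g, hg⟩ := Quotient.exact h1
        unfold quotMat
        rw [← hg]
        exact fiber_sum_inv Q hQG g y b
      calc (∑ a, matPow (quotMat G Q) t ⟦x⟧ a * quotMat G Q a b)
          = ∑ a, ∑ y ∈ Finset.univ.filter
              (fun y : Ω => (⟦y⟧ : Quotient (MulAction.orbitRel G Ω)) = a),
              matPow Q t x y * (∑ z ∈ Finset.univ.filter
                (fun z : Ω => (⟦z⟧ : Quotient (MulAction.orbitRel G Ω)) = b), Q y z) := by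
            refine Finset.sum_congr rfl fun a _ => ?_
            rw [ih, Finset.sum_mul]
            refine Finset.sum_congr rfl fun y hy => ?_
            simp only [Finset.mem_filter, Finset.mem_univ, true_and] at hy
            rw [hstep a y hy]
        _ = ∑ y : Ω, matPow Q t x y * (∑ z ∈ Finset.univ.filter
              (fun z : Ω => (⟦z⟧ : Quotient (MulAction.orbitRel G Ω)) = b), Q y z) := by
            rw [Finset.sum_fiberwise]
        _ = ∑ z ∈ Finset.univ.filter
              (fun z : Ω => (⟦z⟧ : Quotient (MulAction.orbitRel G Ω)) = b),
              ∑ y : Ω, matPow Q t x y * Q y z := by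
            rw [Finset.sum_comm]
            simp [Finset.mul_sum]
        _ = _ := rfl

/-- at every time `t` and from every start state `x`, the total variation
distance of the lumped chain from the lumped vector `π'` is at most the total variation
distance of the original chain from `π`. -/
theorem lumped_tv_le_tv
    {G Ω : Type*} [Group G] [Fintype G] [Fintype Ω] [Nonempty Ω] [MulAction G Ω]
    (Q : Ω → Ω → ℝ)
    (hQ0 : ∀ x y, 0 ≤ Q x y)
    (hQ1 : ∀ x, ∑ y, Q x y = 1)
    (hQG : ∀ (g : G) (x y : Ω), Q (g • x) (g • y) = Q x y)
    (π : Ω → ℝ)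
    (hπ0 : ∀ x, 0 ≤ π x)
    (hπ1 : ∑ x, π x = 1) :
    ∀ (t : ℕ) (x : Ω),
      (1 / 2) * ∑ O : Quotient (MulAction.orbitRel G Ω),
          |matPow (quotMat G Q) t (⟦x⟧ : Quotient (MulAction.orbitRel G Ω)) O -
            lumpVec G π O| ≤
        (1 / 2) * ∑ y : Ω, |matPow Q t x y - π y| := by
  intro t x
  have h : (∑ O : Quotient (MulAction.orbitRel G Ω),
      |matPow (quotMat G Q) t (⟦x⟧ : Quotient (MulAction.orbitRel G Ω)) O - lumpVec G π O|)
      ≤ ∑ y : Ω, |matPow Q t x y - π y| := by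
    calc (∑ O, |matPow (quotMat G Q) t (⟦x⟧ : Quotient (MulAction.orbitRel G Ω)) O
          - lumpVec G π O|)
        = ∑ O, |∑ y ∈ Finset.univ.filter
            (fun y : Ω => (⟦y⟧ : Quotient (MulAction.orbitRel G Ω)) = O),
            (matPow Q t x y - π y)| := by
          refine Finset.sum_congr rfl fun O _ => ?_
          rw [key_s14 Q hQG, lumpVec, Finset.sum_sub_distrib]
      _ ≤ ∑ O, ∑ y ∈ Finset.univ.filter
            (fun y : Ω => (⟦y⟧ : Quotient (MulAction.orbitRel G Ω)) = O),
            |matPow Q t x y - π y| := by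
          exact Finset.sum_le_sum fun O _ => Finset.abs_sum_le_sum_abs _ _
      _ = ∑ y : Ω, |matPow Q t x y - π y| := Finset.sum_fiberwise _ _ _
  linarith
end

section
/- (Proposition 3, mixing time part) Let Q be a G-invariant row-stochastic matrix on a finite state space Ω with quotient matrix Q' on the set 𝒪 of G-orbits, let π be a probability vector on Ω with lumped vector π'(O) := Σ_{x ∈ O} π(x), and fix ε > 0. Define the mixing time τ(ε) of Q as the least T ∈ ℕ such that for all x ∈ Ω and all t ≥ T, (1/2) Σ_{y ∈ Ω} |Q^t(x,y) − π(y)| ≤ ε, and define the mixing time τ'(ε) of Q' analogously with respect to π'. If τ(ε) exists, then τ'(ε) exists and τ'(ε) ≤ τ(ε). -/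
open scoped Classical
open Finset

section
variable {G Ω : Type*} [Group G] [Fintype Ω] [MulAction G Ω]

lemma quot_smul_eq (g : G) (y : Ω) :
    (⟦g • y⟧ : Quotient (MulAction.orbitRel G Ω)) = ⟦y⟧ :=
  Quotient.sound ⟨g, rfl⟩

lemma orbit_sum_invariant (Q : Ω → Ω → ℝ)
    (hQG : ∀ (g : G) (x y : Ω), Q (g • x) (g • y) = Q x y)
    (g : G) (x : Ω) (b : Quotient (MulAction.orbitRel G Ω)) :
    ∑ y ∈ Finset.univ.filter (fun y : Ω => (⟦y⟧ : Quotient (MulAction.orbitRel G Ω)) = b), Q (g • x) y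
    = ∑ y ∈ Finset.univ.filter (fun y : Ω => (⟦y⟧ : Quotient (MulAction.orbitRel G Ω)) = b), Q x y := by
  apply Finset.sum_nbij' (fun y => g⁻¹ • y) (fun y => g • y)
  · intro y hy
    simp only [mem_filter, mem_univ, true_and] at hy ⊢
    rw [← hy]; exact quot_smul_eq g⁻¹ y
  · intro y hy
    simp only [mem_filter, mem_univ, true_and] at hy ⊢
    rw [← hy]; exact quot_smul_eq g y
  · intro y _; simp
  · intro y _; simp
  · intro y _
    conv_lhs => rw [show y = g • (g⁻¹ • y) by simp]
    exact hQG g x (g⁻¹ • y)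

lemma lump_sum_eq (Q : Ω → Ω → ℝ)
    (hQG : ∀ (g : G) (x y : Ω), Q (g • x) (g • y) = Q x y)
    (x : Ω) (b : Quotient (MulAction.orbitRel G Ω)) :
    ∑ y ∈ Finset.univ.filter (fun y : Ω => (⟦y⟧ : Quotient (MulAction.orbitRel G Ω)) = b), Q x y
    = quotMat G Q ⟦x⟧ b := by
  obtain ⟨g, hg⟩ : (⟦x⟧ : Quotient (MulAction.orbitRel G Ω)).out ∈ MulAction.orbit G x :=
    Quotient.mk_out (s := MulAction.orbitRel G Ω) x
  rw [quotMat, ← hg]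
  exact (orbit_sum_invariant Q hQG g x b).symm

lemma lump_pow (Q : Ω → Ω → ℝ)
    (hQG : ∀ (g : G) (x y : Ω), Q (g • x) (g • y) = Q x y)
    (t : ℕ) (x : Ω) (b : Quotient (MulAction.orbitRel G Ω)) :
    matPow (quotMat G Q) t ⟦x⟧ b
    = ∑ y ∈ Finset.univ.filter (fun y : Ω => (⟦y⟧ : Quotient (MulAction.orbitRel G Ω)) = b), matPow Q t x y := by
  induction t generalizing b with
  | zero =>
    simp only [matPow]
    rw [Finset.sum_ite_eq]
    simp
  | succ t ih =>
    simp only [matPow]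
    calc ∑ c, matPow (quotMat G Q) t ⟦x⟧ c * quotMat G Q c b
        = ∑ c, ∑ y ∈ Finset.univ.filter (fun y : Ω => (⟦y⟧ : Quotient (MulAction.orbitRel G Ω)) = c),
            matPow Q t x y * (∑ z ∈ Finset.univ.filter (fun z : Ω => (⟦z⟧ : Quotient (MulAction.orbitRel G Ω)) = b), Q y z) := by
          refine Finset.sum_congr rfl fun c _ => ?_
          rw [ih, Finset.sum_mul]
          refine Finset.sum_congr rfl fun y hy => ?_
          simp only [mem_filter, mem_univ, true_and] at hy
          rw [lump_sum_eq Q hQG y b, hy]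
      _ = ∑ y : Ω, matPow Q t x y * (∑ z ∈ Finset.univ.filter (fun z : Ω => (⟦z⟧ : Quotient (MulAction.orbitRel G Ω)) = b), Q y z) := by
          exact Finset.sum_fiberwise _ _ _
      _ = ∑ z ∈ Finset.univ.filter (fun z : Ω => (⟦z⟧ : Quotient (MulAction.orbitRel G Ω)) = b), ∑ y : Ω, matPow Q t x y * Q y z := by
          simp_rw [Finset.mul_sum]
          exact Finset.sum_comm
end

/-- Proposition 3, mixing time part: if the mixing time `τ(ε)` of `Q`
(w.r.t. `π`) exists, then the mixing time `τ'(ε)` of the quotient matrix (w.r.t. the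
lumped vector `π'`) exists and `τ'(ε) ≤ τ(ε)`. Mixing times are expressed as least
elements of the corresponding sets of valid burn-in times. -/
theorem quotient_mixing_time_le_mixing_time
    {G Ω : Type*} [Group G] [Fintype G] [Fintype Ω] [Nonempty Ω] [MulAction G Ω]
    (Q : Ω → Ω → ℝ)
    (hQ0 : ∀ x y, 0 ≤ Q x y)
    (hQ1 : ∀ x, ∑ y, Q x y = 1)
    (hQG : ∀ (g : G) (x y : Ω), Q (g • x) (g • y) = Q x y)
    (π : Ω → ℝ)
    (hπ0 : ∀ x, 0 ≤ π x)
    (hπ1 : ∑ x, π x = 1)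
    (ε : ℝ) (hε : 0 < ε)
    (T : ℕ)
    (hT : IsLeast {T₀ : ℕ | ∀ x : Ω, ∀ t ≥ T₀,
      (1 / 2) * ∑ y : Ω, |matPow Q t x y - π y| ≤ ε} T) :
    ∃ T' : ℕ,
      IsLeast {T₀ : ℕ | ∀ a : Quotient (MulAction.orbitRel G Ω), ∀ t ≥ T₀,
        (1 / 2) * ∑ b : Quotient (MulAction.orbitRel G Ω),
          |matPow (quotMat G Q) t a b - lumpVec G π b| ≤ ε} T' ∧
      T' ≤ T := by
  set S : Set ℕ := {T₀ : ℕ | ∀ a : Quotient (MulAction.orbitRel G Ω), ∀ t ≥ T₀,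
        (1 / 2) * ∑ b : Quotient (MulAction.orbitRel G Ω),
          |matPow (quotMat G Q) t a b - lumpVec G π b| ≤ ε} with hS
  have hTS : T ∈ S := by
    intro a t ht
    have hbound : ∑ b : Quotient (MulAction.orbitRel G Ω),
        |matPow (quotMat G Q) t a b - lumpVec G π b|
        ≤ ∑ y : Ω, |matPow Q t a.out y - π y| := by
      rw [← Finset.sum_fiberwise Finset.univ
        (fun y : Ω => (⟦y⟧ : Quotient (MulAction.orbitRel G Ω)))
        (fun y => |matPow Q t a.out y - π y|)]
      refine Finset.sum_le_sum fun b _ => ?_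
      have h1 : matPow (quotMat G Q) t a b
          = ∑ y ∈ Finset.univ.filter (fun y : Ω => (⟦y⟧ : Quotient (MulAction.orbitRel G Ω)) = b),
              matPow Q t a.out y := by
        conv_lhs => rw [← Quotient.out_eq a]
        exact lump_pow Q hQG t a.out b
      rw [h1, lumpVec, ← Finset.sum_sub_distrib]
      exact Finset.abs_sum_le_sum_abs _ _
    have := hT.1 a.out t ht
    nlinarith
  refine ⟨Nat.find ⟨T, hTS⟩, ⟨Nat.find_spec ⟨T, hTS⟩, fun n hn => Nat.find_min' _ hn⟩,
    Nat.find_min' _ hTS⟩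
end

section
/- (Theorem 4) Let Ω := (Fin n → V) be the assignment space with G a finite subgroup of the permutation group of Fin n acting on Ω by (g • s) i := s (g⁻¹ i), let Q be a G-invariant row-stochastic matrix on Ω, and let P be a G-invariant stationary probability vector for Q. Fix an injective tuple X̂ : Fin k → Fin n, a value x̂ : Fin k → V, and let θ := Σ_{s : s ∘ X̂ = x̂} P(s), H(s) := the number of tuples A in the G-orbit of X̂ (under the action (g • X̂) j := g (X̂ j)) with s ∘ A = x̂, and M := the size of the G-orbit of X̂. Fix ε > 0, an initial state x₀ ∈ Ω, N ≥ 1, and T ∈ ℕ, and suppose T is at least the mixing time τ'(ε) of the quotient chain, i.e., for all x ∈ Ω, all t ≥ T, and summing over the set 𝒪 of G-orbits of Ω: (1/2) Σ_{O ∈ 𝒪} |Σ_{y ∈ O} Q^t(x, y) − Σ_{y ∈ O} P(y)| ≤ ε. Then the bias of the Rao-Blackwell estimator based on the sample points at times T+1, …, T+N of the chain started at x₀ satisfies |(1/N) Σ_{i=1}^N Σ_{s ∈ Ω} Q^{T+i}(x₀, s) · H(s)/M − θ| ≤ ε. -/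
open scoped Classical
open Finset

section RBAux

variable {n k : ℕ} {V : Type*} [Fintype V] [DecidableEq V]
variable {G : Subgroup (Equiv.Perm (Fin n))}

lemma permAct_permAct (g h : Equiv.Perm (Fin n)) (s : Fin n → V) :
    permAct g (permAct h s) = permAct (g * h) s := by
  funext i; simp [permAct, mul_inv_rev]

lemma permAct_one (s : Fin n → V) : permAct (1 : Equiv.Perm (Fin n)) s = s := by
  funext i; simp [permAct]

lemma tupleAct_tupleAct (g h : Equiv.Perm (Fin n)) (X : Fin k → Fin n) :
    tupleAct g (tupleAct h X) = tupleAct (g * h) X := by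
  funext j; simp [tupleAct]

lemma tupleAct_one (X : Fin k → Fin n) : tupleAct (1 : Equiv.Perm (Fin n)) X = X := by
  funext j; simp [tupleAct]

lemma mem_assignOrbit_self (s : Fin n → V) : s ∈ assignOrbit G s := by
  simp only [assignOrbit, Finset.mem_filter, Finset.mem_univ, true_and]
  exact ⟨1, G.one_mem, permAct_one s⟩

lemma mem_tupleOrbit_self (X : Fin k → Fin n) : X ∈ tupleOrbit G X := by
  simp only [tupleOrbit, Finset.mem_filter, Finset.mem_univ, true_and]
  exact ⟨1, G.one_mem, tupleAct_one X⟩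

lemma assignOrbit_eq_of_mem {s t : Fin n → V} (ht : t ∈ assignOrbit G s) :
    assignOrbit G t = assignOrbit G s := by
  simp only [assignOrbit, Finset.mem_filter, Finset.mem_univ, true_and] at ht
  obtain ⟨g, hg, hgs⟩ := ht
  ext x
  simp only [assignOrbit, Finset.mem_filter, Finset.mem_univ, true_and]
  constructor
  · rintro ⟨h, hh, rfl⟩
    exact ⟨h * g, G.mul_mem hh hg, by rw [← hgs, permAct_permAct]⟩
  · rintro ⟨h, hh, rfl⟩
    exact ⟨h * g⁻¹, G.mul_mem hh (G.inv_mem hg), by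
      rw [← hgs, permAct_permAct, mul_assoc, inv_mul_cancel, mul_one]⟩

/-- Orbits partition the space: summing over orbits equals summing over everything. -/
lemma sum_over_orbits (h : (Fin n → V) → ℝ) :
    ∑ O ∈ Finset.univ.image (fun s : Fin n → V => assignOrbit G s), ∑ t ∈ O, h t
      = ∑ s : Fin n → V, h s := by
  refine Finset.sum_image' (f := fun O => ∑ t ∈ O, h t) h ?_
  intro c _
  refine Finset.sum_congr ?_ (fun _ _ => rfl)
  ext t
  simp only [Finset.mem_filter, Finset.mem_univ, true_and]
  constructor
  · intro htc
    exact assignOrbit_eq_of_mem htc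
  · intro heq
    rw [← heq]; exact mem_assignOrbit_self t

lemma orbitHammingWeight_permAct {g : Equiv.Perm (Fin n)} (hg : g ∈ G)
    (X : Fin k → Fin n) (xhat : Fin k → V) (s : Fin n → V) :
    orbitHammingWeight G X xhat (permAct g s) = orbitHammingWeight G X xhat s := by
  unfold orbitHammingWeight
  refine Finset.card_nbij' (fun A => tupleAct g⁻¹ A) (fun A => tupleAct g A) ?_ ?_ ?_ ?_
  · intro A hA
    simp only [tupleOrbit, Finset.mem_coe, Finset.mem_filter, Finset.mem_univ, true_and] at hA ⊢
    obtain ⟨⟨h, hh, rfl⟩, hcond⟩ := hA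
    refine ⟨⟨g⁻¹ * h, G.mul_mem (G.inv_mem hg) hh, (tupleAct_tupleAct ..).symm ▸ rfl⟩, ?_⟩
    · funext j
      have := congrFun hcond j
      simpa [permAct, tupleAct, Function.comp] using this
  · intro A hA
    simp only [tupleOrbit, Finset.mem_coe, Finset.mem_filter, Finset.mem_univ, true_and] at hA ⊢
    obtain ⟨⟨h, hh, rfl⟩, hcond⟩ := hA
    refine ⟨⟨g * h, G.mul_mem hg hh, (tupleAct_tupleAct ..).symm ▸ rfl⟩, ?_⟩
    · funext j
      have := congrFun hcond j
      simpa [permAct, tupleAct, Function.comp] using this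
  · intro A _
    show tupleAct g (tupleAct g⁻¹ A) = A
    rw [tupleAct_tupleAct, mul_inv_cancel, tupleAct_one]
  · intro A _
    show tupleAct g⁻¹ (tupleAct g A) = A
    rw [tupleAct_tupleAct, inv_mul_cancel, tupleAct_one]

lemma orbitHammingWeight_le_card (X : Fin k → Fin n) (xhat : Fin k → V) (s : Fin n → V) :
    orbitHammingWeight G X xhat s ≤ (tupleOrbit G X).card :=
  Finset.card_filter_le _ _

/-- The stationary expectation of the indicator of `s ∘ A = xhat` is the same for
every tuple `A` in the orbit of `X`. -/
lemma sum_P_filter_comp {P : (Fin n → V) → ℝ}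
    (hPG : ∀ g ∈ G, ∀ s : Fin n → V, P (permAct g s) = P s)
    (X : Fin k → Fin n) (xhat : Fin k → V) {A : Fin k → Fin n} (hA : A ∈ tupleOrbit G X) :
    ∑ s ∈ Finset.univ.filter (fun s : Fin n → V => s ∘ A = xhat), P s
      = ∑ s ∈ Finset.univ.filter (fun s : Fin n → V => s ∘ X = xhat), P s := by
  simp only [tupleOrbit, Finset.mem_filter, Finset.mem_univ, true_and] at hA
  obtain ⟨g, hg, rfl⟩ := hA
  refine (Finset.sum_nbij' (fun s => permAct g s) (fun s => permAct g⁻¹ s) ?_ ?_ ?_ ?_ ?_).symm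
  all_goals intro s hs
  · simp only [Finset.mem_filter, Finset.mem_univ, true_and] at hs ⊢
    funext j
    have := congrFun hs j
    simpa [permAct, tupleAct, Function.comp] using this
  · simp only [Finset.mem_filter, Finset.mem_univ, true_and] at hs ⊢
    funext j
    have := congrFun hs j
    simpa [permAct, tupleAct, Function.comp] using this
  · show permAct g⁻¹ (permAct g s) = s
    rw [permAct_permAct, inv_mul_cancel, permAct_one]
  · show permAct g (permAct g⁻¹ s) = s
    rw [permAct_permAct, mul_inv_cancel, permAct_one]
  · exact (hPG g hg s).symm

/-- Expectation of the (unnormalized) orbit Hamming weight under any G-invariant `P`. -/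
lemma sum_P_mul_hamming {P : (Fin n → V) → ℝ}
    (hPG : ∀ g ∈ G, ∀ s : Fin n → V, P (permAct g s) = P s)
    (X : Fin k → Fin n) (xhat : Fin k → V) :
    ∑ s : Fin n → V, P s * (orbitHammingWeight G X xhat s : ℝ)
      = ((tupleOrbit G X).card : ℝ) *
        ∑ s ∈ Finset.univ.filter (fun s : Fin n → V => s ∘ X = xhat), P s := by
  have key : ∀ s : Fin n → V, (orbitHammingWeight G X xhat s : ℝ)
      = ∑ A ∈ tupleOrbit G X, if s ∘ A = xhat then (1 : ℝ) else 0 := by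
    intro s
    rw [orbitHammingWeight, Finset.card_filter]
    push_cast
    rfl
  calc ∑ s : Fin n → V, P s * (orbitHammingWeight G X xhat s : ℝ)
      = ∑ s : Fin n → V, ∑ A ∈ tupleOrbit G X, P s * (if s ∘ A = xhat then (1:ℝ) else 0) := by
        refine Finset.sum_congr rfl fun s _ => ?_
        rw [key, Finset.mul_sum]
    _ = ∑ A ∈ tupleOrbit G X, ∑ s : Fin n → V, P s * (if s ∘ A = xhat then (1:ℝ) else 0) :=
        Finset.sum_comm
    _ = ∑ A ∈ tupleOrbit G X,
          ∑ s ∈ Finset.univ.filter (fun s : Fin n → V => s ∘ A = xhat), P s := by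
        refine Finset.sum_congr rfl fun A _ => ?_
        rw [Finset.sum_filter]
        refine Finset.sum_congr rfl fun s _ => ?_
        split <;> simp
    _ = ∑ A ∈ tupleOrbit G X,
          ∑ s ∈ Finset.univ.filter (fun s : Fin n → V => s ∘ X = xhat), P s :=
        Finset.sum_congr rfl fun A hA => sum_P_filter_comp hPG X xhat hA
    _ = ((tupleOrbit G X).card : ℝ) * _ := by rw [Finset.sum_const, nsmul_eq_mul]

lemma matPow_row_sum {α : Type*} [Fintype α] {Q : α → α → ℝ}
    (hQ1 : ∀ x, ∑ y, Q x y = 1) (t : ℕ) (x : α) :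
    ∑ y, matPow Q t x y = 1 := by
  induction t with
  | zero => simp [matPow]
  | succ t ih =>
    simp only [matPow]
    rw [Finset.sum_comm]
    calc ∑ y, ∑ z, matPow Q t x y * Q y z
        = ∑ y, matPow Q t x y * ∑ z, Q y z := by
          refine Finset.sum_congr rfl fun y _ => ?_; rw [Finset.mul_sum]
      _ = 1 := by simp only [hQ1, mul_one]; exact ih

end RBAux

/-- Theorem 4: if the burn-in time `T` is at least the mixing time of the
quotient chain, then the bias of the Rao-Blackwell estimator based on the sample points
at times `T+1, …, T+N` of the chain started at `x₀` is at most `ε` in absolute value. -/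
theorem rao_blackwell_bias_le_of_quotient_mixing
    (n k : ℕ) (hn : 0 < n) (hk : 0 < k)
    (V : Type*) [Fintype V] [Nonempty V] [DecidableEq V]
    (G : Subgroup (Equiv.Perm (Fin n)))
    (Q : (Fin n → V) → (Fin n → V) → ℝ)
    (hQ0 : ∀ x y, 0 ≤ Q x y)
    (hQ1 : ∀ x, ∑ y, Q x y = 1)
    (hQG : ∀ g ∈ G, ∀ x y : Fin n → V, Q (permAct g x) (permAct g y) = Q x y)
    (P : (Fin n → V) → ℝ)
    (hP0 : ∀ s, 0 ≤ P s)
    (hP1 : ∑ s : Fin n → V, P s = 1)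
    (hPstat : ∀ y : Fin n → V, ∑ x : Fin n → V, P x * Q x y = P y)
    (hPG : ∀ g ∈ G, ∀ s : Fin n → V, P (permAct g s) = P s)
    (Xhat : Fin k → Fin n) (hX : Function.Injective Xhat)
    (xhat : Fin k → V)
    (ε : ℝ) (hε : 0 < ε)
    (x₀ : Fin n → V) (N : ℕ) (hN : 1 ≤ N) (T : ℕ)
    (hT : ∀ x : Fin n → V, ∀ t ≥ T,
      (1 / 2) * ∑ O ∈ Finset.univ.image (fun s : Fin n → V => assignOrbit G s),
        |(∑ y ∈ O, matPow Q t x y) - ∑ y ∈ O, P y| ≤ ε) :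
    |(1 / (N : ℝ)) * (∑ i ∈ Finset.Icc 1 N,
        ∑ s : Fin n → V, matPow Q (T + i) x₀ s *
          ((orbitHammingWeight G Xhat xhat s : ℝ) / ((tupleOrbit G Xhat).card : ℝ))) -
      ∑ s ∈ Finset.univ.filter (fun s : Fin n → V => s ∘ Xhat = xhat), P s| ≤ ε := by
  classical
  set M : ℝ := ((tupleOrbit G Xhat).card : ℝ) with hM
  have hMpos : 0 < M := by
    have : Xhat ∈ tupleOrbit G Xhat := mem_tupleOrbit_self Xhat
    rw [hM]
    exact_mod_cast Finset.card_pos.2 ⟨Xhat, this⟩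
  set f : (Fin n → V) → ℝ :=
    fun s => (orbitHammingWeight G Xhat xhat s : ℝ) / M with hf
  set θ : ℝ := ∑ s ∈ Finset.univ.filter (fun s : Fin n → V => s ∘ Xhat = xhat), P s with hθ
  -- f is [0,1]-valued
  have hf0 : ∀ s, 0 ≤ f s := fun s =>
    div_nonneg (Nat.cast_nonneg _) hMpos.le
  have hf1 : ∀ s, f s ≤ 1 := by
    intro s
    rw [hf, div_le_one hMpos, hM]
    exact_mod_cast orbitHammingWeight_le_card (G := G) Xhat xhat s
  -- f is constant on orbits
  have hfG : ∀ g ∈ G, ∀ s, f (permAct g s) = f s := by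
    intro g hg s
    simp only [hf, orbitHammingWeight_permAct hg]
  -- stationary expectation of f is θ
  have hPf : ∑ s : Fin n → V, P s * f s = θ := by
    have := sum_P_mul_hamming (G := G) hPG Xhat xhat
    calc ∑ s : Fin n → V, P s * f s
        = (∑ s : Fin n → V, P s * (orbitHammingWeight G Xhat xhat s : ℝ)) / M := by
          rw [Finset.sum_div]
          refine Finset.sum_congr rfl fun s _ => ?_
          rw [hf, mul_div_assoc]
      _ = (M * θ) / M := by rw [this]
      _ = θ := by field_simp
  -- the key single-time bound
  have key : ∀ t ≥ T, |(∑ s : Fin n → V, matPow Q t x₀ s * f s) - θ| ≤ ε := by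
    intro t ht
    set d : (Fin n → V) → ℝ := fun s => matPow Q t x₀ s - P s with hd
    have hd0 : ∑ s : Fin n → V, d s = 0 := by
      simp only [hd, Finset.sum_sub_distrib, matPow_row_sum hQ1 t x₀, hP1, sub_self]
    have step1 : (∑ s : Fin n → V, matPow Q t x₀ s * f s) - θ
        = ∑ s : Fin n → V, d s * (f s - 1 / 2) := by
      have expand : ∀ s : Fin n → V, d s * (f s - 1/2)
          = matPow Q t x₀ s * f s - P s * f s - (1/2) * d s := by
        intro s; simp only [hd]; ring
      rw [Finset.sum_congr rfl fun s _ => expand s]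
      rw [Finset.sum_sub_distrib, Finset.sum_sub_distrib, ← Finset.mul_sum, hd0, hPf]
      ring
    rw [step1, ← sum_over_orbits (G := G) (fun s => d s * (f s - 1/2))]
    -- bound each orbit term
    have orbit_bound : ∀ O ∈ Finset.univ.image (fun s : Fin n → V => assignOrbit G s),
        |∑ s ∈ O, d s * (f s - 1/2)| ≤ (1/2) * |∑ s ∈ O, d s| := by
      intro O hO
      obtain ⟨c, -, rfl⟩ := Finset.mem_image.1 hO
      have hconst : ∀ s ∈ assignOrbit G c, f s = f c := by
        intro s hs
        simp only [assignOrbit, Finset.mem_filter, Finset.mem_univ, true_and] at hs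
        obtain ⟨g, hg, rfl⟩ := hs
        exact hfG g hg c
      have : ∑ s ∈ assignOrbit G c, d s * (f s - 1/2)
          = (f c - 1/2) * ∑ s ∈ assignOrbit G c, d s := by
        rw [Finset.mul_sum]
        refine Finset.sum_congr rfl fun s hs => ?_
        rw [hconst s hs]; ring
      rw [this, abs_mul]
      have : |f c - 1/2| ≤ 1/2 := by
        rw [abs_le]
        constructor <;> [linarith [hf0 c]; linarith [hf1 c]]
      exact mul_le_mul_of_nonneg_right this (abs_nonneg _)
    calc |∑ O ∈ Finset.univ.image (fun s : Fin n → V => assignOrbit G s),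
            ∑ s ∈ O, d s * (f s - 1/2)|
        ≤ ∑ O ∈ Finset.univ.image (fun s : Fin n → V => assignOrbit G s),
            |∑ s ∈ O, d s * (f s - 1/2)| := Finset.abs_sum_le_sum_abs _ _
      _ ≤ ∑ O ∈ Finset.univ.image (fun s : Fin n → V => assignOrbit G s),
            (1/2) * |∑ s ∈ O, d s| := Finset.sum_le_sum orbit_bound
      _ = (1/2) * ∑ O ∈ Finset.univ.image (fun s : Fin n → V => assignOrbit G s),
            |(∑ y ∈ O, matPow Q t x₀ y) - ∑ y ∈ O, P y| := by
          rw [← Finset.mul_sum]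
          congr 1
          refine Finset.sum_congr rfl fun O _ => ?_
          rw [← Finset.sum_sub_distrib]
      _ ≤ ε := hT x₀ t ht
  -- average the bound
  have hNpos : (0:ℝ) < (N:ℝ) := by exact_mod_cast hN
  have main : (1 / (N : ℝ)) * (∑ i ∈ Finset.Icc 1 N,
        ∑ s : Fin n → V, matPow Q (T + i) x₀ s * f s) - θ
      = (1 / (N : ℝ)) * ∑ i ∈ Finset.Icc 1 N,
        ((∑ s : Fin n → V, matPow Q (T + i) x₀ s * f s) - θ) := by
    rw [Finset.sum_sub_distrib, Finset.sum_const, Nat.card_Icc]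
    simp only [Nat.add_sub_cancel, nsmul_eq_mul]
    field_simp
  rw [main, abs_mul, abs_of_pos (by positivity : (0:ℝ) < 1/(N:ℝ))]
  calc (1/(N:ℝ)) * |∑ i ∈ Finset.Icc 1 N,
          ((∑ s : Fin n → V, matPow Q (T + i) x₀ s * f s) - θ)|
      ≤ (1/(N:ℝ)) * ∑ i ∈ Finset.Icc 1 N,
          |(∑ s : Fin n → V, matPow Q (T + i) x₀ s * f s) - θ| := by
        exact mul_le_mul_of_nonneg_left (Finset.abs_sum_le_sum_abs _ _) (by positivity)
    _ ≤ (1/(N:ℝ)) * ∑ i ∈ Finset.Icc 1 N, ε := by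
        refine mul_le_mul_of_nonneg_left (Finset.sum_le_sum fun i _ => ?_) (by positivity)
        exact key (T + i) (Nat.le_add_right T i)
    _ = ε := by
        rw [Finset.sum_const, Nat.card_Icc, nsmul_eq_mul]
        simp only [Nat.add_sub_cancel]
        field_simp
end
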